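/- Let Λ = {m + in : m, n ∈ ℤ} be the integer lattice and let λ₁, λ₂ ∈ Λ be two distinct lattice points. Then Λ \ {λ₁, λ₂} is not a uniqueness set for the Bargmann–Fock space 𝓕: there exists an entire function F, not identically zero, with ∫_ℂ |F(z)|² e^{−π|z|²} dA(z) < ∞, that vanishes at every point of Λ \ {λ₁, λ₂}. -/

import Mathlib

open Complex MeasureTheory

open Real

section FockAux

lemma theta_add_int (z : ℂ) (m : ℤ) :
    jacobiTheta₂ (z + (m : ℂ)) Complex.I = jacobiTheta₂ z Complex.I := by
  induction m using Int.induction_on with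
  | zero => simp
  | succ k ih =>
    push_cast at ih ⊢
    rw [show z + ((k:ℂ) + 1) = (z + (k:ℂ)) + 1 by ring, jacobiTheta₂_add_left]
    exact ih
  | pred k ih =>
    push_cast at ih ⊢
    have h2 := jacobiTheta₂_add_left (z + (-(k:ℂ) - 1)) Complex.I
    rw [show z + (-(k:ℂ) - 1) + 1 = z + -(k:ℂ) by ring] at h2
    rw [← h2]
    exact ih

lemma theta_add_int_mul_I (z : ℂ) (n : ℤ) :
    ∃ c : ℂ, c ≠ 0 ∧ jacobiTheta₂ (z + (n : ℂ) * Complex.I) Complex.I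
      = c * jacobiTheta₂ z Complex.I := by
  induction n using Int.induction_on with
  | zero => exact ⟨1, one_ne_zero, by simp⟩
  | succ k ih =>
    obtain ⟨c, hc, hc2⟩ := ih
    push_cast at hc2 ⊢
    have h := jacobiTheta₂_add_left' (z + (k : ℂ) * Complex.I) Complex.I
    rw [show z + (k : ℂ) * Complex.I + Complex.I = z + ((k:ℂ)+1) * Complex.I by ring] at h
    refine ⟨Complex.exp (-↑Real.pi * Complex.I * (Complex.I + 2 * (z + (k : ℂ) * Complex.I))) * c,
      mul_ne_zero (Complex.exp_ne_zero _) hc, ?_⟩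
    rw [h, hc2]; ring
  | pred k ih =>
    obtain ⟨c, hc, hc2⟩ := ih
    push_cast at hc2 ⊢
    have h := jacobiTheta₂_add_left' (z + (-(k:ℂ) - 1) * Complex.I) Complex.I
    rw [show z + (-(k:ℂ) - 1) * Complex.I + Complex.I = z + (-(k:ℂ)) * Complex.I by ring] at h
    refine ⟨(Complex.exp (-↑Real.pi * Complex.I
        * (Complex.I + 2 * (z + (-(k:ℂ) - 1) * Complex.I))))⁻¹ * c,
      mul_ne_zero (inv_ne_zero (Complex.exp_ne_zero _)) hc, ?_⟩
    have key : Complex.exp (-↑Real.pi * Complex.I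
        * (Complex.I + 2 * (z + (-(k:ℂ) - 1) * Complex.I)))
        * jacobiTheta₂ (z + (-(k:ℂ) - 1) * Complex.I) Complex.I
        = c * jacobiTheta₂ z Complex.I := by
      rw [← h]; rw [show z + -(k:ℂ) * Complex.I = z + (-(k:ℂ)) * Complex.I from rfl] at hc2
      exact hc2
    rw [inv_mul_eq_div, div_mul_eq_mul_div, eq_div_iff (Complex.exp_ne_zero _)]
    linear_combination key

lemma theta_base_zero : jacobiTheta₂ ((1 + Complex.I)/2) Complex.I = 0 := by
  have key : ∀ n : ℤ, jacobiTheta₂_term (-1 - n) ((1 + Complex.I)/2) Complex.I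
      = - jacobiTheta₂_term n ((1 + Complex.I)/2) Complex.I := by
    intro n
    rw [jacobiTheta₂_term, jacobiTheta₂_term]
    have : (2 * ↑Real.pi * Complex.I * (↑(-1 - n) : ℂ) * ((1 + Complex.I)/2)
        + ↑Real.pi * Complex.I * (↑(-1 - n) : ℂ)^2 * Complex.I)
        = (2 * ↑Real.pi * Complex.I * (n : ℂ) * ((1 + Complex.I)/2)
        + ↑Real.pi * Complex.I * (n : ℂ)^2 * Complex.I) + ↑Real.pi * Complex.I
        + (-(n+1) : ℤ) * (2 * ↑Real.pi * Complex.I) := by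
      push_cast
      ring
    rw [this, Complex.exp_add, Complex.exp_add, Complex.exp_int_mul_two_pi_mul_I,
      Complex.exp_pi_mul_I]
    ring
  have he := (Equiv.subLeft (-1 : ℤ)).tsum_eq
    (fun n => jacobiTheta₂_term n ((1 + Complex.I)/2) Complex.I)
  have : jacobiTheta₂ ((1 + Complex.I)/2) Complex.I
      = - jacobiTheta₂ ((1 + Complex.I)/2) Complex.I := by
    conv_lhs => rw [jacobiTheta₂, ← he]
    simp only [Equiv.subLeft_apply]
    calc ∑' n : ℤ, jacobiTheta₂_term (-1 - n) ((1 + Complex.I)/2) Complex.I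
        = ∑' n : ℤ, - jacobiTheta₂_term n ((1 + Complex.I)/2) Complex.I := by
          exact tsum_congr key
      _ = - jacobiTheta₂ ((1 + Complex.I)/2) Complex.I := by rw [tsum_neg]; rfl
  linear_combination this / 2

lemma theta0_pos : jacobiTheta₂ 0 Complex.I
    = ((∑' n : ℤ, Real.exp (-Real.pi * (n:ℝ)^2) : ℝ) : ℂ) := by
  have hterm : ∀ n : ℤ, jacobiTheta₂_term n 0 Complex.I
      = ((Real.exp (-Real.pi * (n:ℝ)^2) : ℝ) : ℂ) := by
    intro n
    rw [jacobiTheta₂_term]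
    rw [show (2 * ↑Real.pi * Complex.I * (n:ℂ) * 0 + ↑Real.pi * Complex.I * (n:ℂ)^2 * Complex.I : ℂ)
      = ((-Real.pi * (n:ℝ)^2 : ℝ) : ℂ) by push_cast; ring_nf; rw [Complex.I_sq]; ring]
    exact (Complex.ofReal_exp _).symm
  rw [jacobiTheta₂]
  simp_rw [hterm]
  have hs : Summable (fun n : ℤ => Real.exp (-Real.pi * (n:ℝ)^2)) := by
    have := summable_pow_mul_jacobiTheta₂_term_bound 0 one_pos 0
    simpa using this
  exact (Complex.ofRealCLM.map_tsum hs).symm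

lemma theta0_ne : jacobiTheta₂ 0 Complex.I ≠ 0 := by
  rw [theta0_pos]
  have hs : Summable (fun n : ℤ => Real.exp (-Real.pi * (n:ℝ)^2)) := by
    have := summable_pow_mul_jacobiTheta₂_term_bound 0 one_pos 0
    simpa using this
  have : 0 < ∑' n : ℤ, Real.exp (-Real.pi * (n:ℝ)^2) :=
    Summable.tsum_pos hs (fun n => (Real.exp_pos _).le) 0 (Real.exp_pos _)
  exact_mod_cast this.ne'

lemma gauss_term_bound {t : ℝ} (ht0 : 0 ≤ t) (ht1 : t < 1) (m : ℤ) :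
    Real.exp (-Real.pi * ((m:ℝ) + t)^2)
      ≤ Real.exp (-Real.pi * (m:ℝ)^2) + Real.exp (-Real.pi * ((m:ℝ) + 1)^2) := by
  rcases le_or_gt 0 (m:ℝ) with hm | hm
  · have h1 : (m:ℝ)^2 ≤ ((m:ℝ) + t)^2 := by nlinarith
    have := Real.exp_le_exp.mpr (by nlinarith [Real.pi_pos] : -Real.pi * ((m:ℝ)+t)^2 ≤ -Real.pi * (m:ℝ)^2)
    nlinarith [Real.exp_pos (-Real.pi * ((m:ℝ) + 1)^2)]
  · have hm1 : (m:ℝ) ≤ -1 := by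
      have : m < 0 := by exact_mod_cast hm
      have : m ≤ -1 := by omega
      exact_mod_cast this
    have h1 : ((m:ℝ) + 1)^2 ≤ ((m:ℝ) + t)^2 := by nlinarith
    have := Real.exp_le_exp.mpr (by nlinarith [Real.pi_pos] : -Real.pi * ((m:ℝ)+t)^2 ≤ -Real.pi * ((m:ℝ)+1)^2)
    nlinarith [Real.exp_pos (-Real.pi * (m:ℝ)^2)]

lemma gauss_base_summable : Summable (fun m : ℤ => Real.exp (-Real.pi * (m:ℝ)^2)) := by
  have := summable_pow_mul_jacobiTheta₂_term_bound 0 one_pos 0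
  simpa using this

lemma gauss_shift_summable : Summable (fun m : ℤ => Real.exp (-Real.pi * ((m:ℝ) + 1)^2)) := by
  have h := gauss_base_summable
  have := ((Equiv.addRight (1:ℤ)).summable_iff
    (f := fun m : ℤ => Real.exp (-Real.pi * (m:ℝ)^2))).mpr h
  refine this.congr fun m => ?_
  simp only [Function.comp, Equiv.coe_addRight]
  push_cast
  ring_nf

noncomputable def CG : ℝ :=
  ∑' m : ℤ, (Real.exp (-Real.pi * (m:ℝ)^2) + Real.exp (-Real.pi * ((m:ℝ) + 1)^2))

lemma gauss_h_summable : Summable (fun m : ℤ =>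
    Real.exp (-Real.pi * (m:ℝ)^2) + Real.exp (-Real.pi * ((m:ℝ) + 1)^2)) :=
  gauss_base_summable.add gauss_shift_summable

lemma gauss_fract_summable (t : ℝ) (ht0 : 0 ≤ t) (ht1 : t < 1) :
    Summable (fun m : ℤ => Real.exp (-Real.pi * ((m:ℝ) + t)^2)) :=
  Summable.of_nonneg_of_le (fun m => (Real.exp_pos _).le)
    (gauss_term_bound ht0 ht1) gauss_h_summable

lemma gauss_sum_summable (y : ℝ) :
    Summable (fun n : ℤ => Real.exp (-Real.pi * ((n:ℝ) + y)^2)) := by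
  have h := (gauss_fract_summable (Int.fract y) (Int.fract_nonneg y) (Int.fract_lt_one y))
  have := ((Equiv.addRight (⌊y⌋ : ℤ)).summable_iff
    (f := fun m : ℤ => Real.exp (-Real.pi * ((m:ℝ) + Int.fract y)^2))).mpr h
  refine this.congr fun m => ?_
  simp only [Function.comp, Equiv.coe_addRight, Int.fract]
  push_cast
  ring_nf

lemma gauss_sum_le (y : ℝ) :
    (∑' n : ℤ, Real.exp (-Real.pi * ((n:ℝ) + y)^2)) ≤ CG := by
  have h := gauss_fract_summable (Int.fract y) (Int.fract_nonneg y) (Int.fract_lt_one y)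
  have heq : (∑' n : ℤ, Real.exp (-Real.pi * ((n:ℝ) + y)^2))
      = ∑' m : ℤ, Real.exp (-Real.pi * ((m:ℝ) + Int.fract y)^2) := by
    rw [← (Equiv.subRight (⌊y⌋ : ℤ)).tsum_eq
      (fun n : ℤ => Real.exp (-Real.pi * ((n:ℝ) + y)^2))]
    refine tsum_congr fun m => ?_
    simp only [Equiv.subRight_apply, Int.fract]
    push_cast
    ring_nf
  rw [heq]
  exact Summable.tsum_le_tsum (gauss_term_bound (Int.fract_nonneg y) (Int.fract_lt_one y)) h gauss_h_summable

lemma CG_pos : 0 < CG := by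
  have h0 : (0:ℝ) < Real.exp (-Real.pi * ((0:ℤ):ℝ)^2) + Real.exp (-Real.pi * (((0:ℤ):ℝ) + 1)^2) := by
    positivity
  exact lt_of_lt_of_le h0 (Summable.le_tsum gauss_h_summable 0 (fun _ _ => by positivity))

lemma theta_norm_le (z : ℂ) :
    ‖jacobiTheta₂ z Complex.I‖ ≤ CG * Real.exp (Real.pi * z.im ^ 2) := by
  set y := z.im
  have hnorm : ∀ n : ℤ, ‖jacobiTheta₂_term n z Complex.I‖
      = Real.exp (Real.pi * y^2) * Real.exp (-Real.pi * ((n:ℝ) + y)^2) := by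
    intro n
    rw [norm_jacobiTheta₂_term, ← Real.exp_add, Complex.I_im]
    congr 1
    ring
  have hs : Summable (fun n : ℤ => ‖jacobiTheta₂_term n z Complex.I‖) := by
    simp_rw [hnorm]
    exact (gauss_sum_summable y).mul_left _
  calc ‖jacobiTheta₂ z Complex.I‖ ≤ ∑' n : ℤ, ‖jacobiTheta₂_term n z Complex.I‖ :=
        norm_tsum_le_tsum_norm hs
    _ = Real.exp (Real.pi * y^2) * ∑' n : ℤ, Real.exp (-Real.pi * ((n:ℝ) + y)^2) := by
        simp_rw [hnorm]; exact tsum_mul_left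
    _ ≤ Real.exp (Real.pi * y^2) * CG :=
        mul_le_mul_of_nonneg_left (gauss_sum_le y) (Real.exp_pos _).le
    _ = CG * Real.exp (Real.pi * y^2) := mul_comm _ _

noncomputable def NumF (z : ℂ) : ℂ :=
  jacobiTheta₂ (z + (1 + Complex.I)/2) Complex.I *
    Complex.exp (↑Real.pi * Complex.I * z + (↑Real.pi/2) * z^2)

lemma entire_dslope {f : ℂ → ℂ} (hf : Differentiable ℂ f) (a : ℂ) :
    Differentiable ℂ (dslope f a) := by
  intro b
  rcases eq_or_ne b a with rfl | hb
  · obtain ⟨p, hp⟩ := hf.analyticAt b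
    exact hp.has_fpower_series_dslope_fslope.differentiableAt
  · exact (differentiableAt_dslope_of_ne hb).mpr (hf b)


lemma numF_differentiable : Differentiable ℂ NumF := by
  apply Differentiable.mul
  · intro z
    exact (differentiableAt_jacobiTheta₂_fst (z + (1 + Complex.I)/2) (τ := Complex.I) (by simp)).comp z
      ((differentiable_id.add_const _) z)
  · apply Differentiable.cexp
    exact (differentiable_id.const_mul _).add ((differentiable_pow 2).const_mul _)

lemma numF_lattice (m n : ℤ) : NumF ((m:ℂ) + (n:ℂ) * Complex.I) = 0 := by
  rw [NumF, mul_eq_zero]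
  left
  rw [show ((m:ℂ) + (n:ℂ) * Complex.I + (1 + Complex.I)/2)
    = (((1 + Complex.I)/2 + (m:ℂ)) + (n:ℂ) * Complex.I) by ring]
  obtain ⟨c, _, h⟩ := theta_add_int_mul_I ((1 + Complex.I)/2 + (m:ℂ)) n
  rw [h, theta_add_int, theta_base_zero, mul_zero]

lemma numF_ne : NumF (-((1 + Complex.I)/2)) ≠ 0 := by
  rw [NumF, show -((1 + Complex.I)/2) + (1 + Complex.I)/2 = 0 by ring]
  exact mul_ne_zero theta0_ne (Complex.exp_ne_zero _)

lemma numF_bound (z : ℂ) :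
    ‖NumF z‖ ^ 2 * Real.exp (-Real.pi * ‖z‖ ^ 2)
      ≤ CG ^ 2 * Real.exp (Real.pi / 2) := by
  set x := z.re with hx
  set y := z.im with hy
  have habs2 : ‖z‖ ^ 2 = x ^ 2 + y ^ 2 := by
    rw [Complex.sq_norm, Complex.normSq_apply]; ring
  have him : (z + (1 + Complex.I)/2).im = y + 1/2 := by
    simp [Complex.add_im, Complex.div_im, hy]
  have hth : ‖jacobiTheta₂ (z + (1 + Complex.I)/2) Complex.I‖
      ≤ CG * Real.exp (Real.pi * (y + 1/2)^2) := by
    have := theta_norm_le (z + (1 + Complex.I)/2)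
    rwa [him] at this
  have hre : (((Real.pi:ℂ)) * Complex.I * z + ((Real.pi:ℂ)/2) * z^2).re
      = -Real.pi * y + Real.pi/2 * (x^2 - y^2) := by
    simp [Complex.add_re, Complex.mul_re, Complex.mul_im, Complex.I_re, Complex.I_im,
      Complex.ofReal_re, Complex.ofReal_im, pow_two, Complex.div_re, Complex.div_im, hx, hy]
  have hexp : ‖Complex.exp (((Real.pi:ℂ)) * Complex.I * z + ((Real.pi:ℂ)/2) * z^2)‖
      = Real.exp (-Real.pi * y + Real.pi/2 * (x^2 - y^2)) := by
    rw [Complex.norm_exp, hre]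
  have h1 : ‖NumF z‖
      ≤ CG * Real.exp (Real.pi * (y + 1/2)^2)
        * Real.exp (-Real.pi * y + Real.pi/2 * (x^2 - y^2)) := by
    rw [NumF, norm_mul, hexp]
    exact mul_le_mul_of_nonneg_right hth (Real.exp_pos _).le
  have hnn : (0:ℝ) ≤ CG * Real.exp (Real.pi * (y + 1/2)^2)
        * Real.exp (-Real.pi * y + Real.pi/2 * (x^2 - y^2)) :=
    le_trans (norm_nonneg _) h1
  calc ‖NumF z‖ ^ 2 * Real.exp (-Real.pi * ‖z‖ ^ 2)
      ≤ (CG * Real.exp (Real.pi * (y + 1/2)^2)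
          * Real.exp (-Real.pi * y + Real.pi/2 * (x^2 - y^2))) ^ 2
          * Real.exp (-Real.pi * (x^2 + y^2)) := by
        rw [habs2]
        exact mul_le_mul_of_nonneg_right
          (pow_le_pow_left₀ (norm_nonneg _) h1 2) (Real.exp_pos _).le
    _ = CG ^ 2 * Real.exp (Real.pi / 2) := by
        rw [mul_pow, mul_pow, sq (Real.exp (Real.pi * (y + 1/2)^2)),
          sq (Real.exp (-Real.pi * y + Real.pi/2 * (x^2 - y^2))),
          ← Real.exp_add, ← Real.exp_add, mul_assoc, mul_assoc, ← Real.exp_add, ← Real.exp_add]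
        congr 1
        ring

lemma half_ne_lattice (a b : ℤ) : -((1 + Complex.I)/2) ≠ (a:ℂ) + (b:ℂ) * Complex.I := by
  intro h
  have him := congrArg Complex.im h
  simp [Complex.add_im, Complex.div_im, Complex.neg_im] at him
  have h2 : ((2 * b : ℤ) : ℝ) = ((-1 : ℤ) : ℝ) := by push_cast; linarith
  have := Int.cast_injective h2
  omega

/-- Removing two distinct points from the integer lattice `ℤ + iℤ` yields a set which
is not a uniqueness set for the Bargmann–Fock space. -/
theorem lattice_minus_two_points_not_uniqueness (a₁ b₁ a₂ b₂ : ℤ)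
    (hne : ((a₁ : ℂ) + (b₁ : ℂ) * Complex.I) ≠ ((a₂ : ℂ) + (b₂ : ℂ) * Complex.I)) :
    ∃ F : ℂ → ℂ, Differentiable ℂ F ∧
      MeasureTheory.Integrable
        (fun z : ℂ => ‖F z‖ ^ 2 * Real.exp (-Real.pi * ‖z‖ ^ 2)) ∧
      (∀ m n : ℤ,
        ((m : ℂ) + (n : ℂ) * Complex.I) ≠ ((a₁ : ℂ) + (b₁ : ℂ) * Complex.I) →
        ((m : ℂ) + (n : ℂ) * Complex.I) ≠ ((a₂ : ℂ) + (b₂ : ℂ) * Complex.I) →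
        F ((m : ℂ) + (n : ℂ) * Complex.I) = 0) ∧
      F ≠ 0 := by
  set L1 : ℂ := (a₁ : ℂ) + (b₁ : ℂ) * Complex.I with hl1
  set L2 : ℂ := (a₂ : ℂ) + (b₂ : ℂ) * Complex.I with hl2
  set F : ℂ → ℂ := dslope (dslope NumF L1) L2 with hF
  have hdiff : Differentiable ℂ F := entire_dslope (entire_dslope numF_differentiable L1) L2
  have hN1 : NumF L1 = 0 := numF_lattice a₁ b₁
  have hN2 : NumF L2 = 0 := numF_lattice a₂ b₂
  have hd1 : ∀ w, w ≠ L1 → dslope NumF L1 w = NumF w / (w - L1) := by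
    intro w hw
    rw [dslope_of_ne _ hw, slope_def_field, hN1, sub_zero]
  have hd1l2 : dslope NumF L1 L2 = 0 := by
    rw [hd1 L2 hne.symm, hN2, zero_div]
  have hFval : ∀ z, z ≠ L1 → z ≠ L2 → F z = NumF z / ((z - L1) * (z - L2)) := by
    intro z h1 h2
    rw [hF, dslope_of_ne _ h2, slope_def_field, hd1l2, sub_zero, hd1 z h1, div_div]
  -- lattice vanishing
  have hvanish : ∀ m n : ℤ,
      ((m : ℂ) + (n : ℂ) * Complex.I) ≠ L1 →
      ((m : ℂ) + (n : ℂ) * Complex.I) ≠ L2 →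
      F ((m : ℂ) + (n : ℂ) * Complex.I) = 0 := by
    intro m n h1 h2
    rw [hFval _ h1 h2, numF_lattice m n, zero_div]
  -- nonvanishing
  have hz01 : -((1 + Complex.I)/2) ≠ L1 := half_ne_lattice a₁ b₁
  have hz02 : -((1 + Complex.I)/2) ≠ L2 := half_ne_lattice a₂ b₂
  have hFne : F ≠ 0 := by
    intro h
    have : F (-((1 + Complex.I)/2)) = 0 := by rw [h]; rfl
    rw [hFval _ hz01 hz02] at this
    exact (div_ne_zero numF_ne
      (mul_ne_zero (sub_ne_zero.mpr hz01) (sub_ne_zero.mpr hz02))) this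
  -- integrability
  have hcont : Continuous fun z : ℂ =>
      ‖F z‖ ^ 2 * Real.exp (-Real.pi * ‖z‖ ^ 2) := by
    have h1 : Continuous F := hdiff.continuous
    continuity
  set C₁ : ℝ := CG ^ 2 * Real.exp (Real.pi / 2) with hC₁
  have hC₁pos : 0 < C₁ := mul_pos (pow_pos CG_pos 2) (Real.exp_pos _)
  set R : ℝ := 2 * (‖L1‖ + ‖L2‖) + 2 with hR
  have hRpos : (1:ℝ) ≤ R := by
    rw [hR]
    have := norm_nonneg L1
    have := norm_nonneg L2
    linarith
  obtain ⟨M, hM⟩ := (isCompact_closedBall (0:ℂ) R).exists_bound_of_continuousOn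
    hcont.continuousOn
  set C : ℝ := max (16 * C₁) (M * (1 + R)^4) with hC
  have hbound : ∀ z : ℂ, ‖F z‖ ^ 2 * Real.exp (-Real.pi * ‖z‖ ^ 2)
      ≤ C * ((1 + ‖z‖)^4)⁻¹ := by
    intro z
    rcases le_or_gt ‖z‖ R with hzR | hzR
    · -- inside ball
      have hmem : z ∈ Metric.closedBall (0:ℂ) R := by
        simpa [Metric.mem_closedBall, dist_zero_right] using hzR
      have h1p := hM z hmem
      rw [Real.norm_eq_abs] at h1p
      have h1 : ‖F z‖ ^ 2 * Real.exp (-Real.pi * ‖z‖ ^ 2) ≤ M :=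
        (le_abs_self _).trans h1p
      have h2 : ((1 + ‖z‖)^4)⁻¹ ≥ ((1 + R)^4)⁻¹ := by
        apply inv_anti₀ (by positivity)
        gcongr
      calc ‖F z‖ ^ 2 * Real.exp (-Real.pi * ‖z‖ ^ 2) ≤ M := h1
        _ = M * (1 + R)^4 * ((1 + R)^4)⁻¹ := by
            field_simp
        _ ≤ C * ((1 + ‖z‖)^4)⁻¹ := by
            apply mul_le_mul (le_max_right _ _) h2 (by positivity)
            positivity
    · -- outside
      have hz1 : (1:ℝ) ≤ ‖z‖ := le_trans hRpos hzR.le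
      have hdist : ∀ l : ℂ, ‖l‖ ≤ (R - 2)/2 → (1 + ‖z‖)/2 ≤ ‖z - l‖ := by
        intro l hl
        have h1 := norm_sub_norm_le z l
        linarith
      have hl1 : ‖L1‖ ≤ (R - 2)/2 := by
        rw [hR]; have := norm_nonneg L2; linarith
      have hl2 : ‖L2‖ ≤ (R - 2)/2 := by
        rw [hR]; have := norm_nonneg L1; linarith
      have hd1' := hdist L1 hl1
      have hd2' := hdist L2 hl2
      have hpos : (0:ℝ) < (1 + ‖z‖)/2 := by positivity
      have hzne1 : z ≠ L1 := by
        intro h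
        rw [h, sub_self, norm_zero] at hd1'
        linarith [norm_nonneg L1]
      have hzne2 : z ≠ L2 := by
        intro h
        rw [h, sub_self, norm_zero] at hd2'
        linarith [norm_nonneg L2]
      rw [hFval z hzne1 hzne2, norm_div, norm_mul, div_pow, div_mul_eq_mul_div]
      have hden : ((1 + ‖z‖)/2 * ((1 + ‖z‖)/2))^2
          ≤ (‖z - L1‖ * ‖z - L2‖)^2 := by
        have hx : (1 + ‖z‖)/2 * ((1 + ‖z‖)/2)
            ≤ ‖z - L1‖ * ‖z - L2‖ :=
          mul_le_mul hd1' hd2' hpos.le (norm_nonneg _)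
        exact pow_le_pow_left₀ (by positivity) hx 2
      calc ‖NumF z‖ ^ 2 * Real.exp (-Real.pi * ‖z‖ ^ 2)
            / (‖z - L1‖ * ‖z - L2‖) ^ 2
          ≤ C₁ / ((1 + ‖z‖)/2 * ((1 + ‖z‖)/2))^2 := by
            apply div_le_div₀ hC₁pos.le (numF_bound z) (by positivity) hden
        _ = 16 * C₁ * ((1 + ‖z‖)^4)⁻¹ := by
            field_simp
            ring
        _ ≤ C * ((1 + ‖z‖)^4)⁻¹ := by
            apply mul_le_mul_of_nonneg_right (le_max_left _ _) (by positivity)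
  have hint : MeasureTheory.Integrable
      (fun z : ℂ => ‖F z‖ ^ 2 * Real.exp (-Real.pi * ‖z‖ ^ 2)) := by
    have hg : Integrable (fun z : ℂ => C * ((1:ℝ) + ‖z‖) ^ (-(4:ℝ))) :=
      (integrable_one_add_norm (E := ℂ) (by
        rw [Complex.finrank_real_complex]; norm_num)).const_mul C
    refine hg.mono' hcont.aestronglyMeasurable ?_
    refine Filter.Eventually.of_forall fun z => ?_
    rw [Real.norm_of_nonneg (by positivity)]
    have hrp : ((1:ℝ) + ‖z‖) ^ (-(4:ℝ)) = (((1:ℝ) + ‖z‖)^(4:ℕ))⁻¹ := by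
      rw [Real.rpow_neg (by positivity), ← Real.rpow_natCast (1 + ‖z‖) 4]
      norm_num
    rw [hrp]
    exact hbound z
  exact ⟨F, hdiff, hint, hvanish, hFne⟩

end FockAux
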